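/- Fix n ≥ 1 and s ∈ (0,1). Let u : ℝⁿ → ℝ be bounded and continuous, let x₀ ∈ ℝⁿ and y₀ > 0, and let Φ_{y₀}(t) := (1/(t·Γ(s))) · (y₀²/(2t))^s · e^{-y₀²/(2t)} for t > 0. Then the subordination formula ∫₀^∞ Φ_{y₀}(t) · ( ∫_{ℝⁿ} (2πt)^{-n/2} e^{-|x − x₀|²/(2t)} u(x) dx ) dt = ∫_{ℝⁿ} K_{y₀}(x₀ − x) u(x) dx holds: averaging the heat semigroup applied to u against the density Φ_{y₀} gives the Poisson-type extension K_{y₀} ∗ u(x₀). -/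

import Mathlib

open MeasureTheory Real

/-- The Poisson-type kernel `K_y(x) = C_{n,s} · y^{2s} / (|x|² + y²)^{n/2+s}`, where
`C_{n,s} = Γ(s + n/2) / (π^{n/2} Γ(s))`. -/
noncomputable def poissonKernelNS (n : ℕ) (s : ℝ) (y : ℝ) (x : EuclideanSpace ℝ (Fin n)) : ℝ :=
  (Real.Gamma (s + n / 2) / (Real.pi ^ ((n : ℝ) / 2) * Real.Gamma s))
    * y ^ (2 * s) / (‖x‖ ^ 2 + y ^ 2) ^ ((n : ℝ) / 2 + s)

section Auxiliary

lemma aux_image_inv : (fun x : ℝ => x⁻¹) '' Set.Ioi 0 = Set.Ioi 0 := by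
  ext x
  constructor
  · rintro ⟨y, hy, rfl⟩; exact inv_pos.2 (Set.mem_Ioi.1 hy)
  · intro hx; exact ⟨x⁻¹, inv_pos.2 (Set.mem_Ioi.1 hx), inv_inv x⟩

lemma invGamma {a b : ℝ} (ha : 0 < a) (hb : 0 < b) :
    MeasureTheory.IntegrableOn (fun t : ℝ => t ^ (-a - 1) * Real.exp (-(b / t))) (Set.Ioi 0) ∧
      ∫ t in Set.Ioi 0, t ^ (-a - 1) * Real.exp (-(b / t)) = (1 / b) ^ a * Real.Gamma a := by
  have hderiv : ∀ x ∈ Set.Ioi (0:ℝ),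
      HasDerivWithinAt (fun y : ℝ => y⁻¹) (-(x^2)⁻¹) (Set.Ioi 0) x :=
    fun x hx => (hasDerivAt_inv (ne_of_gt hx)).hasDerivWithinAt
  have hinj : Set.InjOn (fun y : ℝ => y⁻¹) (Set.Ioi 0) := inv_injective.injOn
  set g : ℝ → ℝ := fun y => y ^ (a - 1) * Real.exp (-(b * y)) with hgdef
  have hg : MeasureTheory.IntegrableOn g (Set.Ioi 0) := by
    have := integrableOn_rpow_mul_exp_neg_mul_rpow (s := a - 1) (p := 1)
      (by linarith) zero_lt_one hb
    simpa [Real.rpow_one, neg_mul, hgdef] using this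
  have hpt : ∀ x ∈ Set.Ioi (0:ℝ),
      |(-(x^2)⁻¹)| • g x⁻¹ = x ^ (-a - 1) * Real.exp (-(b / x)) := by
    intro x hx
    have hx0 : (0:ℝ) < x := hx
    have h1 : |(-(x^2)⁻¹)| = (x^2)⁻¹ := by
      rw [abs_neg, abs_inv, abs_of_nonneg (by positivity)]
    have h2 : (x⁻¹ : ℝ) ^ (a - 1) = (x ^ (a-1))⁻¹ := Real.inv_rpow hx0.le _
    have h3 : x ^ (-a - 1) = ((x^2 : ℝ) * x ^ (a - 1))⁻¹ := by
      rw [← Real.rpow_natCast x 2, ← Real.rpow_add hx0, ← Real.rpow_neg hx0.le]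
      congr 1
      ring
    have h4 : b * x⁻¹ = b / x := by rw [div_eq_mul_inv]
    rw [smul_eq_mul, hgdef]
    simp only []
    rw [h1, h2, h3, h4, mul_inv]
    ring
  have him : (fun y : ℝ => y⁻¹) '' Set.Ioi 0 = Set.Ioi 0 := aux_image_inv
  have heqInt : MeasureTheory.IntegrableOn
      (fun x : ℝ => |(-(x^2)⁻¹)| • g x⁻¹) (Set.Ioi 0) := by
    have := (integrableOn_image_iff_integrableOn_abs_deriv_smul
      measurableSet_Ioi hderiv hinj g).1 (by rwa [him])
    exact this
  have hint : MeasureTheory.IntegrableOn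
      (fun t : ℝ => t ^ (-a - 1) * Real.exp (-(b / t))) (Set.Ioi 0) :=
    (heqInt.congr_fun hpt measurableSet_Ioi)
  refine ⟨hint, ?_⟩
  have := integral_image_eq_integral_abs_deriv_smul measurableSet_Ioi hderiv hinj g
  rw [him] at this
  calc ∫ t in Set.Ioi 0, t ^ (-a - 1) * Real.exp (-(b / t))
      = ∫ x in Set.Ioi 0, |(-(x^2)⁻¹)| • g x⁻¹ :=
        (setIntegral_congr_fun measurableSet_Ioi hpt).symm
    _ = ∫ y in Set.Ioi 0, g y := this.symm
    _ = (1 / b) ^ a * Real.Gamma a := Real.integral_rpow_mul_exp_neg_mul_Ioi ha hb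

lemma gauss_integrable (n : ℕ) {c : ℝ} (hc : 0 < c) :
    Integrable (fun v : EuclideanSpace ℝ (Fin n) => Real.exp (-c * ‖v‖ ^ 2)) := by
  have h := (GaussianFourier.integrable_cexp_neg_mul_sq_norm_add
    (V := EuclideanSpace ℝ (Fin n)) (b := (c : ℂ)) (by simpa using hc) 0 0).norm
  refine h.congr (Filter.Eventually.of_forall fun v => ?_)
  simp [Complex.norm_exp]
  left; rw [← Complex.ofReal_pow, Complex.ofReal_re]

lemma gauss_integral (n : ℕ) {c : ℝ} (hc : 0 < c) :
    ∫ v : EuclideanSpace ℝ (Fin n), Real.exp (-c * ‖v‖ ^ 2) = (π / c) ^ ((n : ℝ) / 2) := by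
  simpa using GaussianFourier.integral_rexp_neg_mul_sq_norm (V := EuclideanSpace ℝ (Fin n)) hc

lemma gausst_integrable (n : ℕ) {t : ℝ} (ht : 0 < t) (x₀ : EuclideanSpace ℝ (Fin n)) :
    Integrable (fun x : EuclideanSpace ℝ (Fin n) => Real.exp (-(‖x - x₀‖ ^ 2 / (2 * t)))) := by
  have h := (gauss_integrable n (c := (2 * t)⁻¹) (by positivity)).comp_sub_right x₀
  refine h.congr (Filter.Eventually.of_forall fun v => ?_)
  have h2 : -(2 * t)⁻¹ * ‖v - x₀‖ ^ 2 = -(‖v - x₀‖ ^ 2 / (2 * t)) := by field_simp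
  dsimp only
  rw [h2]

lemma gausst_integral (n : ℕ) {t : ℝ} (ht : 0 < t) (x₀ : EuclideanSpace ℝ (Fin n)) :
    ∫ x : EuclideanSpace ℝ (Fin n), Real.exp (-(‖x - x₀‖ ^ 2 / (2 * t)))
      = (2 * π * t) ^ ((n : ℝ) / 2) := by
  have h1 : ∀ x : EuclideanSpace ℝ (Fin n),
      Real.exp (-(‖x - x₀‖ ^ 2 / (2 * t))) = Real.exp (-(2 * t)⁻¹ * ‖x - x₀‖ ^ 2) := by
    intro x; rw [neg_mul, inv_mul_eq_div]
  simp_rw [h1]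
  rw [integral_sub_right_eq_self (fun v : EuclideanSpace ℝ (Fin n) =>
    Real.exp (-(2 * t)⁻¹ * ‖v‖ ^ 2)) x₀, gauss_integral n (by positivity : (0:ℝ) < (2 * t)⁻¹)]
  congr 1
  field_simp

lemma heat_subordination (n : ℕ) {s y₀ : ℝ} (hs : 0 < s) (hy₀ : 0 < y₀) (r : ℝ) :
    MeasureTheory.IntegrableOn (fun t : ℝ => (1 / (t * Real.Gamma s)) * (y₀ ^ 2 / (2 * t)) ^ s *
        Real.exp (-(y₀ ^ 2 / (2 * t))) * ((2 * Real.pi * t) ^ (-(n : ℝ) / 2) *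
        Real.exp (-(r ^ 2 / (2 * t))))) (Set.Ioi 0) ∧
      (∫ t in Set.Ioi 0, (1 / (t * Real.Gamma s)) * (y₀ ^ 2 / (2 * t)) ^ s *
        Real.exp (-(y₀ ^ 2 / (2 * t))) * ((2 * Real.pi * t) ^ (-(n : ℝ) / 2) *
        Real.exp (-(r ^ 2 / (2 * t)))))
      = Real.Gamma (s + n / 2) / (Real.pi ^ ((n : ℝ) / 2) * Real.Gamma s)
          * y₀ ^ (2 * s) / (r ^ 2 + y₀ ^ 2) ^ ((n : ℝ) / 2 + s) := by
  have hΓ : 0 < Real.Gamma s := Real.Gamma_pos_of_pos hs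
  set a : ℝ := s + (n : ℝ) / 2 with ha_def
  have ha : 0 < a := by positivity
  set P : ℝ := r ^ 2 + y₀ ^ 2 with hP_def
  have hP : 0 < P := by positivity
  set A : ℝ := P / 2 with hA_def
  have hA : 0 < A := by positivity
  set c : ℝ := (y₀ ^ 2 / 2) ^ s * (2 * Real.pi) ^ (-(n : ℝ) / 2) / Real.Gamma s with hc_def
  have hpt : ∀ t ∈ Set.Ioi (0:ℝ),
      c * (t ^ (-a - 1) * Real.exp (-(A / t)))
        = (1 / (t * Real.Gamma s)) * (y₀ ^ 2 / (2 * t)) ^ s *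
          Real.exp (-(y₀ ^ 2 / (2 * t))) * ((2 * Real.pi * t) ^ (-(n : ℝ) / 2) *
          Real.exp (-(r ^ 2 / (2 * t)))) := by
    intro t ht
    have ht0 : (0:ℝ) < t := ht
    have p1 : (y₀ ^ 2 / (2 * t)) ^ s = (y₀ ^ 2 / 2) ^ s * (t ^ s)⁻¹ := by
      rw [show y₀ ^ 2 / (2 * t) = (y₀ ^ 2 / 2) / t by ring,
        Real.div_rpow (by positivity) ht0.le, div_eq_mul_inv]
    have p2 : (2 * Real.pi * t) ^ (-(n : ℝ) / 2)
        = (2 * Real.pi) ^ (-(n : ℝ) / 2) * t ^ (-(n : ℝ) / 2) :=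
      Real.mul_rpow (by positivity) ht0.le
    have p3 : Real.exp (-(y₀ ^ 2 / (2 * t))) * Real.exp (-(r ^ 2 / (2 * t)))
        = Real.exp (-(A / t)) := by
      rw [← Real.exp_add]
      congr 1
      rw [hA_def, hP_def]
      field_simp
      ring
    have p4 : t ^ (-a - 1) = (t ^ s)⁻¹ * t ^ (-(n : ℝ) / 2) * t⁻¹ := by
      rw [show -a - 1 = (-s) + (-(n : ℝ) / 2) + (-1) by rw [ha_def]; ring,
        Real.rpow_add ht0, Real.rpow_add ht0, Real.rpow_neg ht0.le, Real.rpow_neg_one]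
    rw [p1, p2, ← p3, p4, hc_def]
    field_simp
  have hint : MeasureTheory.IntegrableOn
      (fun t : ℝ => (1 / (t * Real.Gamma s)) * (y₀ ^ 2 / (2 * t)) ^ s *
        Real.exp (-(y₀ ^ 2 / (2 * t))) * ((2 * Real.pi * t) ^ (-(n : ℝ) / 2) *
        Real.exp (-(r ^ 2 / (2 * t))))) (Set.Ioi 0) := by
    refine MeasureTheory.IntegrableOn.congr_fun ?_ hpt measurableSet_Ioi
    exact ((invGamma ha hA).1.const_mul c)
  refine ⟨hint, ?_⟩
  calc (∫ t in Set.Ioi 0, (1 / (t * Real.Gamma s)) * (y₀ ^ 2 / (2 * t)) ^ s *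
        Real.exp (-(y₀ ^ 2 / (2 * t))) * ((2 * Real.pi * t) ^ (-(n : ℝ) / 2) *
        Real.exp (-(r ^ 2 / (2 * t)))))
      = ∫ t in Set.Ioi 0, c * (t ^ (-a - 1) * Real.exp (-(A / t))) :=
        (setIntegral_congr_fun measurableSet_Ioi hpt).symm
    _ = c * ((1 / A) ^ a * Real.Gamma a) := by
        rw [MeasureTheory.integral_const_mul, (invGamma ha hA).2]
    _ = Real.Gamma (s + n / 2) / (Real.pi ^ ((n : ℝ) / 2) * Real.Gamma s)
          * y₀ ^ (2 * s) / (r ^ 2 + y₀ ^ 2) ^ ((n : ℝ) / 2 + s) := by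
        have e1 : (1 / A) ^ a = 2 ^ a * (P ^ a)⁻¹ := by
          rw [show (1 / A) = 2 / P by rw [hA_def]; field_simp,
            Real.div_rpow (by norm_num) hP.le, div_eq_mul_inv]
        have e2 : (2:ℝ) ^ a = 2 ^ s * 2 ^ ((n : ℝ) / 2) := by
          rw [ha_def, Real.rpow_add (by norm_num)]
        have e3 : (y₀ ^ 2 / 2) ^ s = y₀ ^ (2 * s) * ((2:ℝ) ^ s)⁻¹ := by
          rw [Real.div_rpow (by positivity) (by norm_num), div_eq_mul_inv,
            ← Real.rpow_natCast y₀ 2, ← Real.rpow_mul hy₀.le]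
          norm_num
        have e4 : (2 * Real.pi) ^ (-(n : ℝ) / 2)
            = ((2:ℝ) ^ ((n : ℝ) / 2))⁻¹ * (Real.pi ^ ((n : ℝ) / 2))⁻¹ := by
          rw [show -(n : ℝ) / 2 = -((n : ℝ) / 2) by ring, Real.rpow_neg (by positivity),
            Real.mul_rpow (by norm_num) Real.pi_pos.le, mul_inv]
        have e5 : (r ^ 2 + y₀ ^ 2) ^ ((n : ℝ) / 2 + s) = P ^ a := by
          rw [hP_def, ha_def, add_comm s]
        have e6 : Real.Gamma (s + n / 2) = Real.Gamma a := by rw [ha_def]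
        rw [hc_def, e1, e2, e3, e4, e5, e6]
        have h2s : ((2:ℝ) ^ s) ≠ 0 := by positivity
        have h2n : ((2:ℝ) ^ ((n : ℝ) / 2)) ≠ 0 := by positivity
        have hπ : (Real.pi ^ ((n : ℝ) / 2)) ≠ 0 := by positivity
        have hPa : (P ^ a) ≠ 0 := by positivity
        field_simp

noncomputable def subF (n : ℕ) (s y₀ : ℝ) (x₀ : EuclideanSpace ℝ (Fin n))
    (u : EuclideanSpace ℝ (Fin n) → ℝ) (t : ℝ) (x : EuclideanSpace ℝ (Fin n)) : ℝ :=
  (1 / (t * Real.Gamma s)) * (y₀ ^ 2 / (2 * t)) ^ s * Real.exp (-(y₀ ^ 2 / (2 * t)))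
    * ((2 * Real.pi * t) ^ (-(n : ℝ) / 2) * Real.exp (-(‖x - x₀‖ ^ 2 / (2 * t))) * u x)

lemma subF_aesm (n : ℕ) {s : ℝ} (hs : 0 < s) (y₀ : ℝ) (x₀ : EuclideanSpace ℝ (Fin n))
    {u : EuclideanSpace ℝ (Fin n) → ℝ} (hu : Continuous u) :
    AEStronglyMeasurable (Function.uncurry (subF n s y₀ x₀ u))
      ((volume.restrict (Set.Ioi (0:ℝ))).prod volume) := by
  rw [Measure.restrict_prod_eq_prod_univ]
  refine ContinuousOn.aestronglyMeasurable ?_ (measurableSet_Ioi.prod MeasurableSet.univ)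
  have hΓ : Real.Gamma s ≠ 0 := (Real.Gamma_pos_of_pos hs).ne'
  set S : Set (ℝ × EuclideanSpace ℝ (Fin n)) := Set.Ioi (0:ℝ) ×ˢ Set.univ with hS
  have hfst : ∀ p : ℝ × EuclideanSpace ℝ (Fin n), p ∈ S → (0:ℝ) < p.1 := fun p hp => hp.1
  have c1 : ContinuousOn (fun p : ℝ × EuclideanSpace ℝ (Fin n) =>
      1 / (p.1 * Real.Gamma s)) S :=
    ContinuousOn.div continuousOn_const (continuous_fst.continuousOn.mul continuousOn_const)
      (fun p hp => mul_ne_zero (hfst p hp).ne' hΓ)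
  have c2 : ContinuousOn (fun p : ℝ × EuclideanSpace ℝ (Fin n) =>
      (y₀ ^ 2 / (2 * p.1)) ^ s) S := by
    refine ContinuousOn.rpow_const ?_ (fun p hp => Or.inr hs.le)
    exact ContinuousOn.div continuousOn_const (continuousOn_const.mul continuous_fst.continuousOn)
      (fun p hp => by have := hfst p hp; positivity)
  have c3 : ContinuousOn (fun p : ℝ × EuclideanSpace ℝ (Fin n) =>
      Real.exp (-(y₀ ^ 2 / (2 * p.1)))) S := by
    refine Real.continuous_exp.comp_continuousOn (ContinuousOn.neg ?_)
    exact ContinuousOn.div continuousOn_const (continuousOn_const.mul continuous_fst.continuousOn)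
      (fun p hp => by have := hfst p hp; positivity)
  have c4 : ContinuousOn (fun p : ℝ × EuclideanSpace ℝ (Fin n) =>
      (2 * Real.pi * p.1) ^ (-(n : ℝ) / 2)) S := by
    refine ContinuousOn.rpow_const ((continuousOn_const.mul continuous_fst.continuousOn)) ?_
    exact fun p hp => Or.inl (by have := hfst p hp; positivity)
  have c5 : ContinuousOn (fun p : ℝ × EuclideanSpace ℝ (Fin n) =>
      Real.exp (-(‖p.2 - x₀‖ ^ 2 / (2 * p.1)))) S := by
    refine Real.continuous_exp.comp_continuousOn (ContinuousOn.neg ?_)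
    refine ContinuousOn.div ?_ (continuousOn_const.mul continuous_fst.continuousOn)
      (fun p hp => by have := hfst p hp; positivity)
    exact ((continuous_snd.sub continuous_const).norm.pow 2).continuousOn
  have c6 : ContinuousOn (fun p : ℝ × EuclideanSpace ℝ (Fin n) => u p.2) S :=
    (hu.comp continuous_snd).continuousOn
  exact ((c1.mul c2).mul c3).mul ((c4.mul c5).mul c6)

end Auxiliary

theorem subordination_formula
    (n : ℕ) (hn : 1 ≤ n) (s : ℝ) (hs : s ∈ Set.Ioo (0 : ℝ) 1)
    (u : EuclideanSpace ℝ (Fin n) → ℝ) (hu_cont : Continuous u)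
    (hu_bdd : ∃ M : ℝ, ∀ x, |u x| ≤ M)
    (x₀ : EuclideanSpace ℝ (Fin n)) (y₀ : ℝ) (hy₀ : 0 < y₀) :
    ∫ t in Set.Ioi (0 : ℝ),
        (1 / (t * Real.Gamma s)) * (y₀ ^ 2 / (2 * t)) ^ s * Real.exp (-(y₀ ^ 2 / (2 * t)))
          * ∫ x : EuclideanSpace ℝ (Fin n),
              (2 * Real.pi * t) ^ (-(n : ℝ) / 2) * Real.exp (-(‖x - x₀‖ ^ 2 / (2 * t))) * u x
      = ∫ x : EuclideanSpace ℝ (Fin n), poissonKernelNS n s y₀ (x₀ - x) * u x := by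
  obtain ⟨hs0, hs1⟩ := hs
  obtain ⟨M, hM⟩ := hu_bdd
  have hM0 : 0 ≤ M := le_trans (abs_nonneg _) (hM 0)
  have hΓ : 0 < Real.Gamma s := Real.Gamma_pos_of_pos hs0
  -- slice integrability
  have hslice : ∀ t ∈ Set.Ioi (0:ℝ), Integrable (fun x => subF n s y₀ x₀ u t x) := by
    intro t ht
    have h1 : (fun x => subF n s y₀ x₀ u t x)
        = fun x => ((1 / (t * Real.Gamma s)) * (y₀ ^ 2 / (2 * t)) ^ s
            * Real.exp (-(y₀ ^ 2 / (2 * t))) * (2 * Real.pi * t) ^ (-(n : ℝ) / 2))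
          * (u x * Real.exp (-(‖x - x₀‖ ^ 2 / (2 * t)))) := by
      funext x; unfold subF; ring
    rw [h1]
    refine Integrable.const_mul ?_ _
    exact Integrable.bdd_mul (gausst_integrable n ht x₀) hu_cont.aestronglyMeasurable
      (c := M) (Filter.Eventually.of_forall fun x => by simpa [Real.norm_eq_abs] using hM x)
  have hmeas := subF_aesm n hs0 y₀ x₀ hu_cont
  -- bound on the iterated norm integral
  have hbound : ∀ t ∈ Set.Ioi (0:ℝ), ∫ x, ‖subF n s y₀ x₀ u t x‖
      ≤ M * ((y₀ ^ 2 / 2) ^ s / Real.Gamma s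
          * (t ^ (-s - 1) * Real.exp (-(y₀ ^ 2 / 2 / t)))) := by
    intro t ht
    have ht0 : (0:ℝ) < t := ht
    set Φt : ℝ := (1 / (t * Real.Gamma s)) * (y₀ ^ 2 / (2 * t)) ^ s
        * Real.exp (-(y₀ ^ 2 / (2 * t))) with hΦt_def
    set G : ℝ := (2 * Real.pi * t) ^ (-(n : ℝ) / 2) with hG_def
    have hΦt : 0 < Φt := by
      rw [hΦt_def]
      have h1 : (0:ℝ) < 1 / (t * Real.Gamma s) := by positivity
      have h2 : (0:ℝ) < (y₀ ^ 2 / (2 * t)) ^ s := Real.rpow_pos_of_pos (by positivity) s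
      positivity
    have hG : 0 < G := by rw [hG_def]; exact Real.rpow_pos_of_pos (by positivity) _
    have hFx : ∀ x : EuclideanSpace ℝ (Fin n), ‖subF n s y₀ x₀ u t x‖
        = Φt * G * Real.exp (-(‖x - x₀‖ ^ 2 / (2 * t))) * |u x| := by
      intro x
      have h1 : subF n s y₀ x₀ u t x
          = (Φt * G * Real.exp (-(‖x - x₀‖ ^ 2 / (2 * t)))) * u x := by
        rw [hΦt_def, hG_def]; unfold subF; ring
      rw [Real.norm_eq_abs, h1, abs_mul, abs_of_pos (by positivity)]
    calc ∫ x, ‖subF n s y₀ x₀ u t x‖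
        ≤ ∫ x : EuclideanSpace ℝ (Fin n),
            (Φt * G * M) * Real.exp (-(‖x - x₀‖ ^ 2 / (2 * t))) := by
          refine integral_mono ((hslice t ht).norm) ?_ ?_
          · exact (gausst_integrable n ht0 x₀).const_mul _
          · intro x
            dsimp only
            rw [hFx x]
            have := hM x
            have hpos : (0:ℝ) ≤ Φt * G * Real.exp (-(‖x - x₀‖ ^ 2 / (2 * t))) := by positivity
            calc Φt * G * Real.exp (-(‖x - x₀‖ ^ 2 / (2 * t))) * |u x|
                ≤ Φt * G * Real.exp (-(‖x - x₀‖ ^ 2 / (2 * t))) * M :=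
                  mul_le_mul_of_nonneg_left (hM x) hpos
              _ = (Φt * G * M) * Real.exp (-(‖x - x₀‖ ^ 2 / (2 * t))) := by ring
      _ = (Φt * G * M) * (2 * Real.pi * t) ^ ((n : ℝ) / 2) := by
          rw [MeasureTheory.integral_const_mul, gausst_integral n ht0 x₀]
      _ = M * ((y₀ ^ 2 / 2) ^ s / Real.Gamma s
            * (t ^ (-s - 1) * Real.exp (-(y₀ ^ 2 / 2 / t)))) := by
          have hcancel : G * (2 * Real.pi * t) ^ ((n : ℝ) / 2) = 1 := by
            rw [hG_def, ← Real.rpow_add (by positivity),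
              show (-(n : ℝ) / 2 + (n : ℝ) / 2) = 0 by ring, Real.rpow_zero]
          have hΦeq : Φt = (y₀ ^ 2 / 2) ^ s / Real.Gamma s
              * (t ^ (-s - 1) * Real.exp (-(y₀ ^ 2 / 2 / t))) := by
            rw [hΦt_def]
            have p1 : (y₀ ^ 2 / (2 * t)) ^ s = (y₀ ^ 2 / 2) ^ s * (t ^ s)⁻¹ := by
              rw [show y₀ ^ 2 / (2 * t) = (y₀ ^ 2 / 2) / t by ring,
                Real.div_rpow (by positivity) ht0.le, div_eq_mul_inv]
            have p2 : t ^ (-s - 1) = (t ^ s)⁻¹ * t⁻¹ := by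
              rw [show -s - 1 = (-s) + (-1) by ring, Real.rpow_add ht0,
                Real.rpow_neg ht0.le, Real.rpow_neg_one]
            have p3 : y₀ ^ 2 / (2 * t) = y₀ ^ 2 / 2 / t := by ring
            rw [p1, p2, p3]
            field_simp
          calc Φt * G * M * (2 * Real.pi * t) ^ ((n : ℝ) / 2)
              = Φt * M * (G * (2 * Real.pi * t) ^ ((n : ℝ) / 2)) := by ring
            _ = Φt * M := by rw [hcancel, mul_one]
            _ = M * ((y₀ ^ 2 / 2) ^ s / Real.Gamma s
                  * (t ^ (-s - 1) * Real.exp (-(y₀ ^ 2 / 2 / t)))) := by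
                rw [hΦeq]; ring
  -- integrability of the norm-integral in t
  have hnormint : Integrable (fun t => ∫ x, ‖Function.uncurry (subF n s y₀ x₀ u) (t, x)‖)
      (volume.restrict (Set.Ioi (0:ℝ))) := by
    have hBint : Integrable (fun t : ℝ => M * ((y₀ ^ 2 / 2) ^ s / Real.Gamma s
        * (t ^ (-s - 1) * Real.exp (-(y₀ ^ 2 / 2 / t))))) (volume.restrict (Set.Ioi (0:ℝ))) := by
      exact (((invGamma hs0 (by positivity : (0:ℝ) < y₀ ^ 2 / 2)).1.const_mul
        ((y₀ ^ 2 / 2) ^ s / Real.Gamma s)).const_mul M)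
    refine Integrable.mono' hBint (hmeas.norm.integral_prod_right') ?_
    filter_upwards [MeasureTheory.ae_restrict_mem measurableSet_Ioi] with t ht
    rw [Real.norm_eq_abs, abs_of_nonneg (integral_nonneg fun x => norm_nonneg _)]
    exact hbound t ht
  -- product integrability
  have hFint : Integrable (Function.uncurry (subF n s y₀ x₀ u))
      ((volume.restrict (Set.Ioi (0:ℝ))).prod volume) := by
    refine (MeasureTheory.integrable_prod_iff hmeas).2 ⟨?_, hnormint⟩
    filter_upwards [MeasureTheory.ae_restrict_mem measurableSet_Ioi] with t ht
    exact hslice t ht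
  -- main computation
  calc ∫ t in Set.Ioi (0 : ℝ),
        (1 / (t * Real.Gamma s)) * (y₀ ^ 2 / (2 * t)) ^ s * Real.exp (-(y₀ ^ 2 / (2 * t)))
          * ∫ x : EuclideanSpace ℝ (Fin n),
              (2 * Real.pi * t) ^ (-(n : ℝ) / 2) * Real.exp (-(‖x - x₀‖ ^ 2 / (2 * t))) * u x
      = ∫ t in Set.Ioi (0:ℝ), ∫ x : EuclideanSpace ℝ (Fin n), subF n s y₀ x₀ u t x := by
        refine setIntegral_congr_fun measurableSet_Ioi (fun t ht => ?_)
        simp only [subF]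
        exact (MeasureTheory.integral_const_mul _ _).symm
    _ = ∫ x : EuclideanSpace ℝ (Fin n), ∫ t in Set.Ioi (0:ℝ), subF n s y₀ x₀ u t x :=
        MeasureTheory.integral_integral_swap hFint
    _ = ∫ x : EuclideanSpace ℝ (Fin n), poissonKernelNS n s y₀ (x₀ - x) * u x := by
        refine integral_congr_ae (Filter.Eventually.of_forall fun x => ?_)
        dsimp only
        have h1 : (fun t => subF n s y₀ x₀ u t x)
            = fun t => ((1 / (t * Real.Gamma s)) * (y₀ ^ 2 / (2 * t)) ^ s
                * Real.exp (-(y₀ ^ 2 / (2 * t))) * ((2 * Real.pi * t) ^ (-(n : ℝ) / 2)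
                * Real.exp (-(‖x - x₀‖ ^ 2 / (2 * t))))) * u x := by
          funext t; unfold subF; ring
        rw [h1, MeasureTheory.integral_mul_const,
          (heat_subordination n hs0 hy₀ ‖x - x₀‖).2]
        unfold poissonKernelNS
        rw [norm_sub_rev x₀ x]
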